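/- With $\overline{\phi} = \mathrm{ind}_{W_E}^{W_F}\,\xi$ irreducible as above and $\phi = \mathrm{pr} \circ \overline{\phi}$ the composition with the projection $GL_n(\mathbb{C}) \to PGL_n(\mathbb{C})$ (where $n = [W_F : W_E]$), one has $\ker\phi = \{w \in W_E : \xi^s(w) = \xi(w) \text{ for all } s \in W_F\}$. -/
import Mathlib


variable {WF : Type*} [Group WF]

/-- The space of the representation of `WF` induced from the character `ξ` of the
subgroup `WE`: functions `f : WF → ℂ` with `f(e x) = ξ(e) f(x)` for `e ∈ WE`. -/
noncomputable def IndSpace (WE : Subgroup WF) (ξ : WE →* ℂˣ) : Submodule ℂ (WF → ℂ) where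
  carrier := {f | ∀ (e : WE) (x : WF), f ((e : WF) * x) = (ξ e : ℂ) * f x}
  add_mem' := by
    intro f g hf hg e x
    simp only [Pi.add_apply, hf e x, hg e x, mul_add]
  zero_mem' := by intro e x; simp
  smul_mem' := by
    intro c f hf e x
    simp only [Pi.smul_apply, smul_eq_mul, hf e x]
    ring

/-- The induced representation `ind_{WE}^{WF} ξ`, acting by right translation. -/
noncomputable def indRep (WE : Subgroup WF) (ξ : WE →* ℂˣ) :
    Representation ℂ WF (IndSpace WE ξ) where
  toFun g :=
    { toFun := fun f => ⟨fun x => (f : WF → ℂ) (x * g), by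
        intro e x
        simpa [mul_assoc] using f.2 e (x * g)⟩
      map_add' := by intro f1 f2; apply Subtype.ext; funext x; simp
      map_smul' := by intro c f; apply Subtype.ext; funext x; simp }
  map_one' := by apply LinearMap.ext; intro f; apply Subtype.ext; funext x; simp
  map_mul' g h := by
    apply LinearMap.ext; intro f; apply Subtype.ext; funext x
    simp [mul_assoc]


attribute [local instance] Classical.propDecidable

/-- The function supported on the coset `WE * t`, with value `ξ(e)` at `e * t`. -/
noncomputable def indBasis (WE : Subgroup WF) (ξ : WE →* ℂˣ) (t : WF) : IndSpace WE ξ :=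
  ⟨fun x => if h : x * t⁻¹ ∈ WE then (ξ ⟨x * t⁻¹, h⟩ : ℂ) else 0, by
    intro e x
    beta_reduce
    by_cases h : x * t⁻¹ ∈ WE
    · have h2 : (e : WF) * x * t⁻¹ ∈ WE := by
        have he : (e : WF) * x * t⁻¹ = (e : WF) * (x * t⁻¹) := by group
        rw [he]; exact mul_mem e.2 h
      rw [dif_pos h, dif_pos h2]
      have he : (⟨(e : WF) * x * t⁻¹, h2⟩ : WE) = e * ⟨x * t⁻¹, h⟩ := by
        ext; simp [mul_assoc]
      rw [he, map_mul]
      push_cast; ring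
    · have h2 : ¬ ((e : WF) * x * t⁻¹ ∈ WE) := by
        intro hc
        apply h
        have he : x * t⁻¹ = (e : WF)⁻¹ * ((e : WF) * x * t⁻¹) := by group
        rw [he]; exact mul_mem (inv_mem e.2) hc
      rw [dif_neg h, dif_neg h2, mul_zero]⟩

lemma indBasis_apply_mem (WE : Subgroup WF) (ξ : WE →* ℂˣ) (t x : WF)
    (h : x * t⁻¹ ∈ WE) :
    ((indBasis WE ξ t : IndSpace WE ξ) : WF → ℂ) x = (ξ ⟨x * t⁻¹, h⟩ : ℂ) := by
  show dite _ _ _ = _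
  rw [dif_pos h]

lemma indBasis_apply_not_mem (WE : Subgroup WF) (ξ : WE →* ℂˣ) (t x : WF)
    (h : ¬ (x * t⁻¹ ∈ WE)) :
    ((indBasis WE ξ t : IndSpace WE ξ) : WF → ℂ) x = 0 := by
  show dite _ _ _ = _
  rw [dif_neg h]

/-- With `φ̄ = ind_{WE}^{WF} ξ` irreducible and `φ = pr ∘ φ̄` the composition with the
projection `GL_n(ℂ) → PGL_n(ℂ)` (`n = [WF : WE]`), an element lies in `ker φ` iff `φ̄`
maps it to a scalar; this happens exactly for `w ∈ WE` with `ξ(s⁻¹ w s) = ξ(w)` for all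
`s ∈ WF`. -/
theorem stmt6 (WE : Subgroup WF) [WE.FiniteIndex] (ξ : WE →* ℂˣ)
    (hirr : ∀ U : Submodule ℂ (IndSpace WE ξ),
      (∀ (g : WF) (f : IndSpace WE ξ), f ∈ U → indRep WE ξ g f ∈ U) → U = ⊥ ∨ U = ⊤) :
    ∀ w : WF, (∃ c : ℂˣ, indRep WE ξ w = (c : ℂ) • (LinearMap.id : IndSpace WE ξ →ₗ[ℂ] IndSpace WE ξ)) ↔
      ∃ hw : w ∈ WE, ∀ s : WF, ∃ hs : s⁻¹ * w * s ∈ WE,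
        ξ ⟨s⁻¹ * w * s, hs⟩ = ξ ⟨w, hw⟩ := by
  intro w
  constructor
  · rintro ⟨c, hc⟩
    have key : ∀ (f : IndSpace WE ξ) (x : WF),
        (f : WF → ℂ) (x * w) = (c : ℂ) * (f : WF → ℂ) x := by
      intro f x
      have h := congrArg (fun T : IndSpace WE ξ →ₗ[ℂ] IndSpace WE ξ =>
        ((T f : IndSpace WE ξ) : WF → ℂ) x) hc
      simpa [indRep] using h
    have main : ∀ s : WF, ∃ hs : s⁻¹ * w * s ∈ WE,
        (ξ ⟨s⁻¹ * w * s, hs⟩ : ℂ) = (c : ℂ) := by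
      intro s
      have h1 := key (indBasis WE ξ s⁻¹) s⁻¹
      have hmem1 : s⁻¹ * (s⁻¹)⁻¹ ∈ WE := by rw [inv_inv, inv_mul_cancel]; exact one_mem WE
      rw [indBasis_apply_mem WE ξ s⁻¹ s⁻¹ hmem1] at h1
      have h11 : (⟨s⁻¹ * (s⁻¹)⁻¹, hmem1⟩ : WE) = 1 := by ext; simp
      rw [h11, map_one] at h1
      by_cases hmem : (s⁻¹ * w) * (s⁻¹)⁻¹ ∈ WE
      · have hs : s⁻¹ * w * s ∈ WE := by
          have : (s⁻¹ * w) * (s⁻¹)⁻¹ = s⁻¹ * w * s := by group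
          rwa [this] at hmem
        refine ⟨hs, ?_⟩
        rw [indBasis_apply_mem WE ξ s⁻¹ (s⁻¹ * w) hmem] at h1
        have he : (⟨(s⁻¹ * w) * (s⁻¹)⁻¹, hmem⟩ : WE) = ⟨s⁻¹ * w * s, hs⟩ := by
          ext; group
        rw [he] at h1
        simpa using h1
      · rw [indBasis_apply_not_mem WE ξ s⁻¹ (s⁻¹ * w) hmem] at h1
        exfalso
        have : (c : ℂ) ≠ 0 := c.ne_zero
        simp at h1
        exact this h1.symm
    obtain ⟨hw1, hc1⟩ := main 1
    have hw : w ∈ WE := by simpa using hw1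
    have hww : (⟨1⁻¹ * w * 1, hw1⟩ : WE) = ⟨w, hw⟩ := by ext; simp
    rw [hww] at hc1
    refine ⟨hw, fun s => ?_⟩
    obtain ⟨hs, hcs⟩ := main s
    refine ⟨hs, Units.ext ?_⟩
    rw [hcs, hc1]
  · rintro ⟨hw, hs⟩
    refine ⟨ξ ⟨w, hw⟩, ?_⟩
    apply LinearMap.ext; intro f; apply Subtype.ext; funext x
    show (f : WF → ℂ) (x * w) = ((ξ ⟨w, hw⟩ : ℂ) • f : IndSpace WE ξ).1 x
    obtain ⟨h1, h2⟩ := hs x⁻¹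
    have h1' : x * w * x⁻¹ ∈ WE := by
      have : x⁻¹⁻¹ * w * x⁻¹ = x * w * x⁻¹ := by group
      rwa [this] at h1
    have h2' : ξ ⟨x * w * x⁻¹, h1'⟩ = ξ ⟨w, hw⟩ := by
      have he : (⟨x⁻¹⁻¹ * w * x⁻¹, h1⟩ : WE) = ⟨x * w * x⁻¹, h1'⟩ := by ext; group
      rw [← he]; exact h2
    have hx : x * w = ((⟨x * w * x⁻¹, h1'⟩ : WE) : WF) * x := by
      show x * w = (x * w * x⁻¹) * x
      group
    rw [hx, f.2 ⟨x * w * x⁻¹, h1'⟩ x, h2']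
    rfl
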